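/- Let G(q) = α q qᵀ + β qᵀ + q βᵀ + γ and G̃(q) = α̃ q qᵀ + β̃ qᵀ + q β̃ᵀ + γ̃ with α, α̃ ∈ ℝ, β, β̃ ∈ ℝⁿ constant vectors, γ, γ̃ constant symmetric n×n real matrices, and define matrix fields A_1(q),…,A_n(q) by the polynomial expansion adjugate(G̃(q) + t G(q)) = Σ_{i=0}^{n−1} A_{n−i}(q) t^{i} (so that A_1 = adjugate(G) and A_n = adjugate(G̃)). Then every A_r is a Killing matrix: it is symmetric and ∂_i (A_r)_{jk} + ∂_j (A_r)_{ki} + ∂_k (A_r)_{ij} = 0 for all i, j, k ∈ {1,…,n}, where ∂_i = ∂/∂q_i. -/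

import Mathlib

open Finset Matrix Polynomial

/-- `G(q) = α q qᵀ + β qᵀ + q βᵀ + γ`. -/
def Gmat {n : ℕ} (α : ℝ) (β : Fin n → ℝ) (γ : Matrix (Fin n) (Fin n) ℝ)
    (q : Fin n → ℝ) : Matrix (Fin n) (Fin n) ℝ :=
  Matrix.of fun i j => α * q i * q j + β i * q j + q i * β j + γ i j

/-- The matrix `G̃(q) + t G(q)` regarded as a matrix over `ℝ[t]`. -/
noncomputable def pencilMat {n : ℕ} (α αt : ℝ) (β βt : Fin n → ℝ)
    (γ γt : Matrix (Fin n) (Fin n) ℝ) (q : Fin n → ℝ) :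
    Matrix (Fin n) (Fin n) (Polynomial ℝ) :=
  (Gmat αt βt γt q).map Polynomial.C
    + (Gmat α β γ q).map (fun x => Polynomial.C x * Polynomial.X)

/-- The matrices `A_r(q)` defined by
`adjugate(G̃(q) + t G(q)) = Σ_{i=0}^{n−1} A_{n−i}(q) t^i`, i.e. `A_r` is the
coefficient of `t^{n−r}` (so `A_1 = adjugate G`, `A_n = adjugate G̃`). -/
noncomputable def Amat {n : ℕ} (α αt : ℝ) (β βt : Fin n → ℝ)
    (γ γt : Matrix (Fin n) (Fin n) ℝ) (r : ℕ) (q : Fin n → ℝ) :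
    Matrix (Fin n) (Fin n) ℝ :=
  Matrix.of fun i j =>
    ((Matrix.adjugate (pencilMat α αt β βt γ γt q)) i j).coeff (n - r)


section DetDeriv
variable {R A : Type*} [CommRing R] [CommRing A] [Algebra R A]

lemma derivation_finset_prod (D : Derivation R A A) {β : Type*} [DecidableEq β]
    (s : Finset β) (f : β → A) :
    D (∏ b ∈ s, f b) = ∑ b ∈ s, D (f b) * ∏ c ∈ s.erase b, f c := by
  induction s using Finset.induction_on with
  | empty => simp
  | @insert a s ha ih =>
      rw [Finset.prod_insert ha, D.leibniz, ih, Finset.sum_insert ha, Finset.erase_insert ha,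
        smul_eq_mul, smul_eq_mul, Finset.mul_sum]
      rw [mul_comm (∏ c ∈ s, f c) (D (f a)), add_comm]
      congr 1
      refine Finset.sum_congr rfl fun b hb => ?_
      rw [Finset.erase_insert_of_ne (by rintro rfl; exact ha hb),
        Finset.prod_insert (fun h => ha (Finset.mem_of_mem_erase h))]
      ring

variable {m : Type*} [Fintype m] [DecidableEq m]

lemma derivation_det (D : Derivation R A A) (M : Matrix m m A) :
    D M.det = ∑ r, (M.updateRow r fun c => D (M r c)).det := by
  simp only [Matrix.det_apply']
  rw [Finset.sum_comm, map_sum]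
  refine Finset.sum_congr rfl fun σ _ => ?_
  have hsgn : D ((Equiv.Perm.sign σ : ℤ) : A) = 0 := by
    rcases Int.units_eq_one_or (Equiv.Perm.sign σ) with h | h <;> simp [h]
  rw [D.leibniz, hsgn, smul_zero, add_zero, derivation_finset_prod, smul_eq_mul, Finset.mul_sum]
  rw [← Equiv.sum_comp σ (fun r => (Equiv.Perm.sign σ : ℤ) *
      ∏ j, (M.updateRow r fun c => D (M r c)) (σ j) j)]
  refine Finset.sum_congr rfl fun i _ => ?_
  congr 1
  rw [← Finset.mul_prod_erase Finset.univ _ (Finset.mem_univ i), Matrix.updateRow_self]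
  congr 1
  refine Finset.prod_congr rfl fun j hj => ?_
  rw [Matrix.updateRow_ne (fun h => (Finset.ne_of_mem_erase hj) (σ.injective h))]

lemma det_updateRow_eq_sum (M : Matrix m m A) (i : m) (u : m → A) :
    (M.updateRow i u).det = ∑ a, u a * adjugate M a i := by
  rw [← Matrix.cramer_transpose_apply]
  have hu : u = ∑ a, Pi.single a (u a) := by rw [Finset.univ_sum_single]
  conv_lhs => rw [hu]
  rw [map_sum, Finset.sum_apply]
  refine Finset.sum_congr rfl fun a _ => ?_
  have hs : Pi.single a (u a) = u a • (Pi.single a 1 : m → A) := by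
    rw [← Pi.single_smul, smul_eq_mul, mul_one]
  rw [hs, _root_.map_smul, Pi.smul_apply, smul_eq_mul, Matrix.cramer_transpose_apply,
    ← Matrix.adjugate_apply]

end DetDeriv

namespace Stmt18Aux

inductive PV (n : ℕ) where
  | q : Fin n → PV n
  | pa : PV n
  | pat : PV n
  | pt : PV n
  | pb : Fin n → PV n
  | pbt : Fin n → PV n
  | pg : Fin n → Fin n → PV n
  | pgt : Fin n → Fin n → PV n
deriving DecidableEq

variable {n : ℕ}
open MvPolynomial

noncomputable def αP (n : ℕ) : MvPolynomial (PV n) ℝ := X .pat + X .pt * X .pa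
noncomputable def βP (i : Fin n) : MvPolynomial (PV n) ℝ := X (.pbt i) + X .pt * X (.pb i)
noncomputable def γP (i j : Fin n) : MvPolynomial (PV n) ℝ :=
  (X (.pgt i j) + X (.pgt j i)) + X .pt * (X (.pg i j) + X (.pg j i))
noncomputable def vP (i : Fin n) : MvPolynomial (PV n) ℝ := αP n * X (.q i) + βP i

noncomputable def MP (n : ℕ) : Matrix (Fin n) (Fin n) (MvPolynomial (PV n) ℝ) :=
  Matrix.of fun i j => αP n * X (.q i) * X (.q j) + βP i * X (.q j) + X (.q i) * βP j + γP i j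

noncomputable def AP (n : ℕ) : Matrix (Fin n) (Fin n) (MvPolynomial (PV n) ℝ) :=
  adjugate (MP n)

noncomputable def wP (c : Fin n) : MvPolynomial (PV n) ℝ := ∑ a, AP n c a * vP a

lemma MP_symm (i j : Fin n) : MP n i j = MP n j i := by
  simp only [MP, Matrix.of_apply, γP]; ring

lemma MP_transpose : (MP n)ᵀ = MP n :=
  Matrix.ext fun a b => MP_symm b a

lemma AP_symm (a b : Fin n) : AP n a b = AP n b a := by
  have h := Matrix.adjugate_transpose (MP n)
  rw [MP_transpose] at h
  have := congrFun (congrFun h b) a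
  simpa [AP, Matrix.transpose_apply] using this

lemma pderiv_q_αP (i : Fin n) : pderiv (PV.q i) (αP n) = 0 := by simp [αP]

lemma pderiv_q_βP (i : Fin n) (a : Fin n) : pderiv (PV.q i) (βP a) = 0 := by simp [βP]

lemma pderiv_q_γP (i : Fin n) (a b : Fin n) : pderiv (PV.q i) (γP a b) = 0 := by simp [γP]

lemma pderiv_q_Xq (i a : Fin n) :
    pderiv (PV.q i) (X (PV.q a) : MvPolynomial (PV n) ℝ) = if a = i then 1 else 0 := by
  split_ifs with h
  · subst h; simp
  · exact pderiv_X_of_ne (by simpa using h)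

lemma pderiv_MP (i a b : Fin n) :
    pderiv (PV.q i) (MP n a b)
      = (if a = i then vP b else 0) + (if b = i then vP a else 0) := by
  simp only [MP, Matrix.of_apply, map_add, pderiv_mul, pderiv_q_αP, pderiv_q_βP, pderiv_q_γP,
    pderiv_q_Xq, vP]
  split_ifs <;> ring

/-- derivative of the determinant -/
lemma pderiv_q_det (i : Fin n) :
    pderiv (PV.q i) (MP n).det = 2 * wP i := by
  rw [derivation_det]
  have : ∀ r : Fin n, ((MP n).updateRow r fun c => pderiv (PV.q i) (MP n r c)).det
      = (if r = i then ∑ a, vP a * AP n a i else 0) + vP r * AP n i r := by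
    intro r
    have hrow : (fun c => pderiv (PV.q i) (MP n r c))
        = (fun c => if r = i then vP c else 0)
          + fun c => vP r * (Pi.single i 1 : Fin n → MvPolynomial (PV n) ℝ) c := by
      funext c
      simp [pderiv_MP, Pi.single_apply, mul_ite]
    rw [hrow, Matrix.det_updateRow_add]
    congr 1
    · split_ifs with h
      · subst h
        rw [det_updateRow_eq_sum]
        rfl
      · exact Matrix.det_eq_zero_of_row_eq_zero r (fun c => by simp [Matrix.updateRow_self, h])
    · have : (fun c => vP r * (Pi.single i 1 : Fin n → MvPolynomial (PV n) ℝ) c)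
          = vP r • (Pi.single i 1 : Fin n → MvPolynomial (PV n) ℝ) := by
        funext c; simp [smul_eq_mul]
      rw [this, Matrix.det_updateRow_smul, ← Matrix.adjugate_apply]
      rfl
  rw [Finset.sum_congr rfl fun r _ => this r, Finset.sum_add_distrib, Finset.sum_ite_eq'
    Finset.univ i (fun _ => ∑ a, vP a * AP n a i)]
  simp only [Finset.mem_univ, if_true]
  rw [wP, two_mul]
  congr 1
  · exact Finset.sum_congr rfl fun a _ => by rw [mul_comm, AP_symm]
  · exact Finset.sum_congr rfl fun a _ => by rw [mul_comm (vP a), AP_symm]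

/-- entrywise partial derivative of a matrix of polynomials -/
noncomputable def DMat (i : Fin n) (N : Matrix (Fin n) (Fin n) (MvPolynomial (PV n) ℝ)) :
    Matrix (Fin n) (Fin n) (MvPolynomial (PV n) ℝ) :=
  Matrix.of fun a b => pderiv (PV.q i) (N a b)

lemma DMat_mul (i : Fin n) (N N' : Matrix (Fin n) (Fin n) (MvPolynomial (PV n) ℝ)) :
    DMat i (N * N') = DMat i N * N' + N * DMat i N' := by
  ext a b : 2
  simp only [DMat, Matrix.mul_apply, Matrix.add_apply, Matrix.of_apply, map_sum, pderiv_mul,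
    Finset.sum_add_distrib]

lemma DMat_smul_one (i : Fin n) (d : MvPolynomial (PV n) ℝ) :
    DMat i (d • (1 : Matrix (Fin n) (Fin n) (MvPolynomial (PV n) ℝ)))
      = pderiv (PV.q i) d • 1 := by
  ext a b : 2
  by_cases h : a = b <;>
    simp [DMat, Matrix.smul_apply, Matrix.one_apply, h, pderiv_mul, smul_eq_mul]

lemma key_matrix_identity (i : Fin n) :
    (MP n).det • DMat i (AP n)
      = pderiv (PV.q i) (MP n).det • AP n - AP n * DMat i (MP n) * AP n := by
  have h := congrArg (DMat i) (Matrix.adjugate_mul (MP n))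
  rw [DMat_mul, DMat_smul_one] at h
  have h2 := congrArg (· * adjugate (MP n)) h
  simp only [add_mul, Matrix.smul_mul, Matrix.one_mul, Matrix.mul_assoc,
    Matrix.mul_adjugate, Matrix.mul_smul, Matrix.mul_one] at h2
  rw [← Matrix.mul_assoc] at h2
  rw [AP]
  linear_combination (norm := abel) h2

lemma middle_term (i j k : Fin n) :
    (AP n * DMat i (MP n) * AP n) j k = AP n j i * wP k + wP j * AP n i k := by
  have inner : ∀ l, (AP n * DMat i (MP n)) j l
      = AP n j i * vP l + (if l = i then wP j else 0) := by
    intro l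
    simp only [Matrix.mul_apply, DMat, Matrix.of_apply, pderiv_MP, mul_add, mul_ite, mul_zero,
      Finset.sum_add_distrib, Finset.sum_ite_eq' Finset.univ, Finset.mem_univ, if_true]
    congr 1
    split_ifs with h <;> simp [wP]
  rw [Matrix.mul_apply, Finset.sum_congr rfl fun l _ => by rw [inner l]]
  simp only [add_mul, ite_mul, zero_mul, Finset.sum_add_distrib,
    Finset.sum_ite_eq' Finset.univ, Finset.mem_univ, if_true, mul_assoc, ← Finset.mul_sum]
  congr 2
  rw [wP]
  exact Finset.sum_congr rfl fun l _ => by rw [mul_comm, AP_symm]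

lemma key_entry (i j k : Fin n) :
    (MP n).det * pderiv (PV.q i) (AP n j k)
      = 2 * wP i * AP n j k - (AP n j i * wP k + wP j * AP n i k) := by
  have h := congrFun (congrFun (key_matrix_identity (n := n) i) j) k
  simp only [Matrix.smul_apply, Matrix.sub_apply, smul_eq_mul] at h
  rw [pderiv_q_det, middle_term] at h
  simpa [DMat] using h

lemma det_MP_ne_zero : (MP n).det ≠ 0 := by
  set f : MvPolynomial (PV n) ℝ →+* ℝ := MvPolynomial.eval (fun v : PV n => match v with
      | .pgt i j => if i = j then (1:ℝ)/2 else 0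
      | _ => 0) with hf
  intro h0
  have hev : f (MP n).det = 1 := by
    rw [RingHom.map_det, RingHom.mapMatrix_apply]
    have hm : (MP n).map f = 1 := by
      ext a b : 2
      by_cases h : a = b
      · simp [MP, αP, βP, γP, Matrix.map_apply, Matrix.one_apply, h, hf]
        norm_num
      · simp [MP, αP, βP, γP, Matrix.map_apply, Matrix.one_apply, h, hf, Ne.symm h]
    rw [hm, Matrix.det_one]
  rw [h0, map_zero] at hev
  exact zero_ne_one hev

lemma cyclic_identity (i j k : Fin n) :
    pderiv (PV.q i) (AP n j k) + pderiv (PV.q j) (AP n k i) + pderiv (PV.q k) (AP n i j)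
      = 0 := by
  have hd := det_MP_ne_zero (n := n)
  apply mul_left_cancel₀ hd
  rw [mul_zero, mul_add, mul_add, key_entry, key_entry, key_entry]
  rw [AP_symm j i, AP_symm k j, AP_symm i k]
  ring

/-! ### Transfer to the concrete real setting -/

section Transfer

variable (α αt : ℝ) (β βt : Fin n → ℝ) (γ γt : Matrix (Fin n) (Fin n) ℝ)

/-- assignment of polynomial values (in `ℝ[t]`) to the abstract variables -/
noncomputable def asg (w : Fin n → ℝ) : PV n → Polynomial ℝ := fun v =>
  match v with
  | .q i => Polynomial.C (w i)
  | .pa => Polynomial.C α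
  | .pat => Polynomial.C αt
  | .pt => Polynomial.X
  | .pb i => Polynomial.C (β i)
  | .pbt i => Polynomial.C (βt i)
  | .pg i j => Polynomial.C (γ i j / 2)
  | .pgt i j => Polynomial.C (γt i j / 2)

noncomputable def Φm (w : Fin n → ℝ) : MvPolynomial (PV n) ℝ →ₐ[ℝ] Polynomial ℝ :=
  aeval (asg α αt β βt γ γt w)

end Transfer


section Analysis

variable (α αt : ℝ) (β βt : Fin n → ℝ) (γ γt : Matrix (Fin n) (Fin n) ℝ)

/-- the candidate derivative -/
noncomputable def Dclm (q : Fin n → ℝ) (P : MvPolynomial (PV n) ℝ) (m : ℕ) :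
    (Fin n → ℝ) →L[ℝ] ℝ :=
  ∑ i, (((Φm α αt β βt γ γt q) (pderiv (PV.q i) P)).coeff m) •
    (ContinuousLinearMap.proj i : (Fin n → ℝ) →L[ℝ] ℝ)

lemma Dclm_apply_single (q : Fin n → ℝ) (P : MvPolynomial (PV n) ℝ) (m : ℕ) (j : Fin n) :
    Dclm α αt β βt γ γt q P m (Pi.single j 1)
      = ((Φm α αt β βt γ γt q) (pderiv (PV.q j) P)).coeff m := by
  rw [Dclm, ContinuousLinearMap.sum_apply]
  have h1 : ∀ i : Fin n, (((Φm α αt β βt γ γt q) (pderiv (PV.q i) P)).coeff m •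
        (ContinuousLinearMap.proj i : (Fin n → ℝ) →L[ℝ] ℝ)) (Pi.single j 1)
      = if i = j then ((Φm α αt β βt γ γt q) (pderiv (PV.q i) P)).coeff m else 0 := by
    intro i
    rw [ContinuousLinearMap.smul_apply, ContinuousLinearMap.proj_apply, Pi.single_apply,
      smul_eq_mul, mul_ite, mul_one, mul_zero]
  rw [Finset.sum_congr rfl fun i _ => h1 i, Finset.sum_ite_eq' Finset.univ j]
  simp

lemma aux_const (q : Fin n → ℝ) (p : MvPolynomial (PV n) ℝ) (v : PV n) (c : Polynomial ℝ)
    (hc : ∀ w : Fin n → ℝ, asg α αt β βt γ γt w v = c)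
    (hv : ∀ i : Fin n, pderiv (PV.q i) (X v : MvPolynomial (PV n) ℝ) = 0)
    (ih : ∀ m : ℕ, HasFDerivAt (fun w => ((Φm α αt β βt γ γt w) p).coeff m)
      (Dclm α αt β βt γ γt q p m) q) (m : ℕ) :
    HasFDerivAt (fun w => ((Φm α αt β βt γ γt w) (p * X v)).coeff m)
      (Dclm α αt β βt γ γt q (p * X v) m) q := by
  have hf : (fun w => ((Φm α αt β βt γ γt w) (p * X v)).coeff m)
      = fun w => ∑ x ∈ Finset.HasAntidiagonal.antidiagonal m,
          ((Φm α αt β βt γ γt w) p).coeff x.1 * c.coeff x.2 := by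
    funext w
    rw [_root_.map_mul, Φm, MvPolynomial.aeval_X, hc w, Polynomial.coeff_mul]
  have hD : Dclm α αt β βt γ γt q (p * X v) m
      = ∑ x ∈ Finset.HasAntidiagonal.antidiagonal m, c.coeff x.2 • Dclm α αt β βt γ γt q p x.1 := by
    simp only [Dclm, pderiv_mul, hv, mul_zero, add_zero, _root_.map_mul, Φm,
      MvPolynomial.aeval_X, hc q, Polynomial.coeff_mul, Finset.sum_smul, Finset.smul_sum]
    rw [Finset.sum_comm]
    refine Finset.sum_congr rfl fun i _ => Finset.sum_congr rfl fun x _ => ?_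
    rw [mul_comm, mul_smul]
  rw [hf, hD]
  exact HasFDerivAt.fun_sum fun (x : ℕ × ℕ) _ => (ih x.1).mul_const (c.coeff x.2)

lemma main_hasFDerivAt (q : Fin n → ℝ) (P : MvPolynomial (PV n) ℝ) :
    ∀ m : ℕ, HasFDerivAt (fun w => ((Φm α αt β βt γ γt w) P).coeff m)
      (Dclm α αt β βt γ γt q P m) q := by
  induction P using MvPolynomial.induction_on with
  | C r =>
      intro m
      have hf : (fun w => ((Φm α αt β βt γ γt w) (MvPolynomial.C r)).coeff m)
          = fun _ : Fin n → ℝ => ((algebraMap ℝ (Polynomial ℝ)) r).coeff m := by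
        funext w; rw [Φm, MvPolynomial.aeval_C]
      have hD : Dclm α αt β βt γ γt q (MvPolynomial.C r) m = 0 := by
        simp [Dclm, pderiv_C]
      rw [hf, hD]
      exact hasFDerivAt_const _ _
  | add p p' hp hp' =>
      intro m
      have hf : (fun w => ((Φm α αt β βt γ γt w) (p + p')).coeff m)
          = fun w => ((Φm α αt β βt γ γt w) p).coeff m
              + ((Φm α αt β βt γ γt w) p').coeff m := by
        funext w; rw [map_add, Polynomial.coeff_add]
      have hD : Dclm α αt β βt γ γt q (p + p') m
          = Dclm α αt β βt γ γt q p m + Dclm α αt β βt γ γt q p' m := by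
        simp [Dclm, map_add, Polynomial.coeff_add, add_smul, Finset.sum_add_distrib]
      rw [hf, hD]
      exact (hp m).add (hp' m)
  | mul_X p v ih =>
      cases v with
      | q i0 =>
          intro m
          have hf : (fun w => ((Φm α αt β βt γ γt w) (p * X (PV.q i0))).coeff m)
              = fun w => ((Φm α αt β βt γ γt w) p).coeff m * w i0 := by
            funext w
            rw [_root_.map_mul, Φm, MvPolynomial.aeval_X]
            exact Polynomial.coeff_mul_C _ _ _
          have hterm : ∀ i : Fin n,
              ((Φm α αt β βt γ γt q) (pderiv (PV.q i) (p * X (PV.q i0)))).coeff m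
                = ((Φm α αt β βt γ γt q) (pderiv (PV.q i) p)).coeff m * q i0
                  + if i0 = i then ((Φm α αt β βt γ γt q) p).coeff m else 0 := by
            intro i
            rw [pderiv_mul, pderiv_q_Xq]
            split_ifs with h
            · rw [mul_one, map_add, _root_.map_mul, Φm, MvPolynomial.aeval_X,
                Polynomial.coeff_add]
              exact congrArg (· + ((MvPolynomial.aeval (asg α αt β βt γ γt q)) p).coeff m)
                (Polynomial.coeff_mul_C _ _ _)
            · rw [mul_zero, add_zero, _root_.map_mul, Φm, MvPolynomial.aeval_X, add_zero]
              exact Polynomial.coeff_mul_C _ _ _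
          have hD : Dclm α αt β βt γ γt q (p * X (PV.q i0)) m
              = ((Φm α αt β βt γ γt q) p).coeff m •
                  (ContinuousLinearMap.proj i0 : (Fin n → ℝ) →L[ℝ] ℝ)
                + q i0 • Dclm α αt β βt γ γt q p m := by
            rw [Dclm, Finset.sum_congr rfl fun i _ => by rw [hterm i]]
            simp only [add_smul, Finset.sum_add_distrib, ite_smul, zero_smul]
            rw [Finset.sum_ite_eq Finset.univ i0]
            simp only [Finset.mem_univ, if_true]
            rw [add_comm]
            congr 1
            rw [Dclm, Finset.smul_sum]
            refine Finset.sum_congr rfl fun i _ => ?_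
            rw [smul_smul, mul_comm]
          rw [hf, hD]
          have hproj : HasFDerivAt (fun w : Fin n → ℝ => w i0)
              (ContinuousLinearMap.proj i0 : (Fin n → ℝ) →L[ℝ] ℝ) q := by
            exact (ContinuousLinearMap.proj i0 : (Fin n → ℝ) →L[ℝ] ℝ).hasFDerivAt
          exact (ih m).mul hproj
      | pa =>
          exact aux_const α αt β βt γ γt q p PV.pa (Polynomial.C α) (fun _ => rfl)
            (fun i => pderiv_X_of_ne (by simp)) ih
      | pat =>
          exact aux_const α αt β βt γ γt q p PV.pat (Polynomial.C αt) (fun _ => rfl)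
            (fun i => pderiv_X_of_ne (by simp)) ih
      | pt =>
          exact aux_const α αt β βt γ γt q p PV.pt (Polynomial.X) (fun _ => rfl)
            (fun i => pderiv_X_of_ne (by simp)) ih
      | pb a =>
          exact aux_const α αt β βt γ γt q p (PV.pb a) (Polynomial.C (β a)) (fun _ => rfl)
            (fun i => pderiv_X_of_ne (by simp)) ih
      | pbt a =>
          exact aux_const α αt β βt γ γt q p (PV.pbt a) (Polynomial.C (βt a)) (fun _ => rfl)
            (fun i => pderiv_X_of_ne (by simp)) ih
      | pg a b =>
          exact aux_const α αt β βt γ γt q p (PV.pg a b) (Polynomial.C (γ a b / 2)) (fun _ => rfl)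
            (fun i => pderiv_X_of_ne (by simp)) ih
      | pgt a b =>
          exact aux_const α αt β βt γ γt q p (PV.pgt a b) (Polynomial.C (γt a b / 2)) (fun _ => rfl)
            (fun i => pderiv_X_of_ne (by simp)) ih

end Analysis


section Glue

variable {n : ℕ} (α αt : ℝ) (β βt : Fin n → ℝ) (γ γt : Matrix (Fin n) (Fin n) ℝ)
open MvPolynomial

lemma map_MP (hγ : γ.IsSymm) (hγt : γt.IsSymm) (w : Fin n → ℝ) :
    (Φm α αt β βt γ γt w).mapMatrix (MP n) = pencilMat α αt β βt γ γt w := by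
  apply Matrix.ext; intro a b
  have hg : γ b a = γ a b := hγ.apply a b
  have hgt : γt b a = γt a b := hγt.apply a b
  have half : ∀ x : ℝ, Polynomial.C x = Polynomial.C (x / 2) + Polynomial.C (x / 2) := by
    intro x; rw [← map_add]; norm_num
  simp only [AlgHom.mapMatrix_apply, Matrix.map_apply, MP, Matrix.of_apply, Φm, map_add,
    _root_.map_mul, MvPolynomial.aeval_X, asg, pencilMat, Matrix.add_apply, Gmat, αP, βP, γP,
    Polynomial.C_mul, Polynomial.C_add, hg, hgt]
  rw [half (γ a b), half (γt a b)]
  ring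

lemma pencil_symm (hγ : γ.IsSymm) (hγt : γt.IsSymm) (w : Fin n → ℝ) :
    (pencilMat α αt β βt γ γt w)ᵀ = pencilMat α αt β βt γ γt w := by
  apply Matrix.ext; intro a b
  simp only [Matrix.transpose_apply, pencilMat, Matrix.add_apply, Matrix.map_apply, Gmat,
    Matrix.of_apply]
  rw [show αt * w b * w a + βt b * w a + w b * βt a + γt b a
        = αt * w a * w b + βt a * w b + w a * βt b + γt a b by rw [hγt.apply a b]; ring,
    show α * w b * w a + β b * w a + w b * β a + γ b a
        = α * w a * w b + β a * w b + w a * β b + γ a b by rw [hγ.apply a b]; ring]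

lemma Amat_eq_coeff (hγ : γ.IsSymm) (hγt : γt.IsSymm) (r : ℕ) (w : Fin n → ℝ) (j k : Fin n) :
    Amat α αt β βt γ γt r w j k = ((Φm α αt β βt γ γt w) (AP n j k)).coeff (n - r) := by
  have hadj := AlgHom.map_adjugate (Φm α αt β βt γ γt w) (MP n)
  rw [map_MP α αt β βt γ γt hγ hγt w] at hadj
  show ((Matrix.adjugate (pencilMat α αt β βt γ γt w)) j k).coeff (n - r) = _
  rw [← hadj]
  rfl

end Glue

end Stmt18Aux

open Stmt18Aux in
/-- STATEMENT 18: every coefficient matrix `A_r` of `adjugate(G̃ + tG)` is a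
Killing matrix: symmetric and
`∂_i (A_r)_{jk} + ∂_j (A_r)_{ki} + ∂_k (A_r)_{ij} = 0` for all `i, j, k`. -/
theorem stmt18 (n : ℕ) (α αt : ℝ) (β βt : Fin n → ℝ)
    (γ γt : Matrix (Fin n) (Fin n) ℝ) (hγ : γ.IsSymm) (hγt : γt.IsSymm) :
    ∀ r ∈ Finset.Icc 1 n,
      (∀ q : Fin n → ℝ, (Amat α αt β βt γ γt r q).IsSymm)
      ∧ ∀ (q : Fin n → ℝ) (i j k : Fin n),
          fderiv ℝ (fun w => Amat α αt β βt γ γt r w j k) q (Pi.single i 1)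
            + fderiv ℝ (fun w => Amat α αt β βt γ γt r w k i) q (Pi.single j 1)
            + fderiv ℝ (fun w => Amat α αt β βt γ γt r w i j) q (Pi.single k 1)
          = 0 := by
  intro r _
  constructor
  · intro q
    have hsp := pencil_symm α αt β βt γ γt hγ hγt q
    have hadj := Matrix.adjugate_transpose (pencilMat α αt β βt γ γt q)
    rw [hsp] at hadj
    apply Matrix.ext; intro a b
    have : Matrix.adjugate (pencilMat α αt β βt γ γt q) b a
        = Matrix.adjugate (pencilMat α αt β βt γ γt q) a b :=
      congrFun (congrFun hadj a) b
    simp only [Matrix.transpose_apply, Amat, Matrix.of_apply, this]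
  · intro q i j k
    have hfun : ∀ a b : Fin n, (fun w => Amat α αt β βt γ γt r w a b)
        = fun w => ((Φm α αt β βt γ γt w) (AP n a b)).coeff (n - r) :=
      fun a b => funext fun w => Amat_eq_coeff α αt β βt γ γt hγ hγt r w a b
    have hfd : ∀ a b : Fin n, ∀ i' : Fin n,
        fderiv ℝ (fun w => Amat α αt β βt γ γt r w a b) q (Pi.single i' 1)
          = ((Φm α αt β βt γ γt q) (MvPolynomial.pderiv (PV.q i') (AP n a b))).coeff (n - r) := by
      intro a b i'
      rw [hfun a b, (main_hasFDerivAt α αt β βt γ γt q (AP n a b) (n - r)).fderiv,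
        Dclm_apply_single]
    rw [hfd j k i, hfd k i j, hfd i j k, ← Polynomial.coeff_add, ← Polynomial.coeff_add,
      ← map_add, ← map_add, cyclic_identity, map_zero, Polynomial.coeff_zero]
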